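/- Let N ≥ 1 be a natural number, ν ∈ (0,1), μ = 1 − ν, and α > 0. Define f(x,t) = e^{−αt} ∫₀¹ (1−u)^x (1 + (ν/μ)u)^{N−x} u^{α−1} du for integers 0 ≤ x ≤ N and t ∈ ℝ. Then for every integer 1 ≤ x ≤ N and every t ∈ ℝ, (∂/∂t) f(x,t) + μ·x·(f(x−1,t) − f(x,t)) + ν·(N−x)·(f(x+1,t) − f(x,t)) = 0. -/

import Mathlib

open Filter Topology MeasureTheory

open Set in
private lemma ehrenfest_integrable (c : ℝ) (hc : 0 < c) (α : ℝ) (hα : 0 < α)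
    (k m : ℕ) :
    IntegrableOn (fun u : ℝ => (1-u)^k * (1+c*u)^m * u^(α-1)) (Set.Ioo (0:ℝ) 1) := by
  have h1 : IntegrableOn (fun u : ℝ => u ^ (α-1)) (Set.Ioo (0:ℝ) 1) := by
    have h := intervalIntegral.intervalIntegrable_rpow' (a := (0:ℝ)) (b := 1) (r := α - 1)
      (by linarith)
    rw [intervalIntegrable_iff_integrableOn_Ioo_of_le zero_le_one] at h
    exact h
  apply MeasureTheory.Integrable.bdd_mul (c := (1+c)^m) h1
  · exact (((continuous_const.sub continuous_id).pow k).mul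
      ((continuous_const.add (continuous_const.mul continuous_id)).pow m)).aestronglyMeasurable
  · filter_upwards [ae_restrict_mem measurableSet_Ioo] with u hu
    obtain ⟨hu0, hu1⟩ := hu
    rw [Real.norm_eq_abs, abs_mul, abs_pow, abs_pow]
    have h1 : |1 - u| ≤ 1 := by rw [abs_le]; constructor <;> linarith
    have h2 : |1 + c*u| ≤ 1 + c := by rw [abs_le]; constructor <;> nlinarith
    calc |1-u|^k * |1+c*u|^m ≤ 1^k * (1+c)^m := by
          apply mul_le_mul (pow_le_pow_left₀ (abs_nonneg _) h1 k)
            (pow_le_pow_left₀ (abs_nonneg _) h2 m) (by positivity) (by positivity)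
      _ = (1+c)^m := by rw [one_pow, one_mul]

private lemma ehrenfest_key
    (N : ℕ) (ν μ : ℝ) (hν0 : 0 < ν) (hν1 : ν < 1) (hμ : μ = 1 - ν)
    (α : ℝ) (hα : 0 < α) (x : ℕ) (hx1 : 1 ≤ x) (hxN : x ≤ N) :
    α * (∫ u in Set.Ioo (0:ℝ) 1, (1-u)^x * (1+(ν/μ)*u)^(N-x) * u^(α-1))
      - μ * x * ((∫ u in Set.Ioo (0:ℝ) 1, (1-u)^(x-1) * (1+(ν/μ)*u)^(N-(x-1)) * u^(α-1))
          - ∫ u in Set.Ioo (0:ℝ) 1, (1-u)^x * (1+(ν/μ)*u)^(N-x) * u^(α-1))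
      - ν * ((N:ℝ) - x) * ((∫ u in Set.Ioo (0:ℝ) 1, (1-u)^(x+1) * (1+(ν/μ)*u)^(N-(x+1)) * u^(α-1))
          - ∫ u in Set.Ioo (0:ℝ) 1, (1-u)^x * (1+(ν/μ)*u)^(N-x) * u^(α-1)) = 0 := by
  have hμ0 : 0 < μ := by rw [hμ]; linarith
  set c := ν / μ with hcdef
  clear_value c
  have hc0 : 0 < c := by rw [hcdef]; exact div_pos hν0 hμ0
  have hνc : ν = μ * c := by rw [hcdef]; field_simp
  have hμc : μ * (1 + c) = 1 := by linear_combination hμ - hνc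
  set D : ℝ → ℝ := fun u =>
    α * ((1-u)^x * (1+c*u)^(N-x) * u^(α-1))
      - μ * x * ((1-u)^(x-1) * (1+c*u)^(N-(x-1)) * u^(α-1)
          - (1-u)^x * (1+c*u)^(N-x) * u^(α-1))
      - ν * ((N:ℝ) - x) * ((1-u)^(x+1) * (1+c*u)^(N-(x+1)) * u^(α-1)
          - (1-u)^x * (1+c*u)^(N-x) * u^(α-1)) with hD
  set G : ℝ → ℝ := fun u => (1-u)^x * (1+c*u)^(N-x) * u^α with hG
  have I0 := ehrenfest_integrable c hc0 α hα x (N-x)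
  have I1 := ehrenfest_integrable c hc0 α hα (x-1) (N-(x-1))
  have I2 := ehrenfest_integrable c hc0 α hα (x+1) (N-(x+1))
  have J0 : Integrable (fun u : ℝ => α * ((1-u)^x * (1+c*u)^(N-x) * u^(α-1)))
      (volume.restrict (Set.Ioo (0:ℝ) 1)) := I0.const_mul α
  have J1 : Integrable (fun u : ℝ => μ * x * ((1-u)^(x-1) * (1+c*u)^(N-(x-1)) * u^(α-1)
      - (1-u)^x * (1+c*u)^(N-x) * u^(α-1))) (volume.restrict (Set.Ioo (0:ℝ) 1)) :=
    (I1.sub I0).const_mul _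
  have J2 : Integrable (fun u : ℝ => ν * ((N:ℝ) - x) * ((1-u)^(x+1) * (1+c*u)^(N-(x+1)) * u^(α-1)
      - (1-u)^x * (1+c*u)^(N-x) * u^(α-1))) (volume.restrict (Set.Ioo (0:ℝ) 1)) :=
    (I2.sub I0).const_mul _
  have J01 : Integrable (fun u : ℝ => α * ((1-u)^x * (1+c*u)^(N-x) * u^(α-1))
      - μ * x * ((1-u)^(x-1) * (1+c*u)^(N-(x-1)) * u^(α-1)
          - (1-u)^x * (1+c*u)^(N-x) * u^(α-1))) (volume.restrict (Set.Ioo (0:ℝ) 1)) :=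
    J0.sub J1
  have ID : IntegrableOn D (Set.Ioo (0:ℝ) 1) := J01.sub J2
  -- derivative of G is D on Ioo
  have hderiv : ∀ u ∈ Set.Ioo (0:ℝ) 1, HasDerivAt G (D u) u := by
    intro u hu
    obtain ⟨hu0, hu1⟩ := hu
    have hA : HasDerivAt (fun u : ℝ => (1-u)^x) ((x:ℝ) * (1-u)^(x-1) * (-1)) u := by
      have := ((hasDerivAt_id u).const_sub 1).fun_pow (n := x)
      simpa using this
    have hB : HasDerivAt (fun u : ℝ => (1+c*u)^(N-x))
        (((N-x : ℕ):ℝ) * (1+c*u)^(N-x-1) * c) u := by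
      have h0 : HasDerivAt (fun u : ℝ => 1 + c*u) c u := by
        simpa using ((hasDerivAt_id u).const_mul c).const_add 1
      exact h0.fun_pow (n := N-x)
    have hP : HasDerivAt (fun u : ℝ => u^α) (α * u^(α-1)) u :=
      Real.hasDerivAt_rpow_const (Or.inl hu0.ne')
    have hGd := (hA.fun_mul hB).fun_mul hP
    convert hGd using 1 <;> try rfl
    have hw : u ^ α = u ^ (α-1) * u := by
      rw [← Real.rpow_add_one hu0.ne' (α-1)]; norm_num
    obtain ⟨x', rfl⟩ : ∃ x', x = x' + 1 := ⟨x - 1, by omega⟩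
    have hcast : ((N - (x'+1) : ℕ):ℝ) = (N:ℝ) - ((x'+1:ℕ):ℝ) := Nat.cast_sub hxN
    simp only [hD, Nat.add_sub_cancel]
    set m := N - (x'+1) with hm
    rw [show N - x' = m + 1 from by omega, show N - (x'+1+1) = m - 1 from by omega, ← hcast]
    have hmrel : (m:ℝ) * (1+c*u) ^ (m-1) * (1+c*u) = (m:ℝ) * (1+c*u) ^ m := by
      rcases m with _ | k
      · simp
      · simp only [Nat.add_sub_cancel, Nat.cast_add]
        rw [pow_succ]; ring
    simp only [hw, hνc]
    push_cast
    linear_combination (-(((x':ℝ)+1) * (1-u)^x' * (1+c*u)^m * u^(α-1) * u)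
        + c * (m:ℝ) * (1-u)^x' * (1-u) * u^(α-1) * u * (1+c*u)^(m-1)) * hμc
      + (-(μ*c*(1-u)^x' * (1-u) * u^(α-1))) * hmrel
  -- FTC
  have hGcont : ContinuousOn G (Set.Icc (0:ℝ) 1) := by
    have hrp : Continuous fun u : ℝ => u ^ α :=
      continuous_iff_continuousAt.2 fun y => Real.continuousAt_rpow_const y α (Or.inr hα.le)
    exact ((((continuous_const.sub continuous_id).pow x).mul
      ((continuous_const.add (continuous_const.mul continuous_id)).pow (N-x))).mul
      hrp).continuousOn
  have hDint : IntervalIntegrable D volume 0 1 := by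
    rw [intervalIntegrable_iff_integrableOn_Ioo_of_le zero_le_one]
    exact ID
  have hftc := intervalIntegral.integral_eq_sub_of_hasDeriv_right_of_le zero_le_one hGcont
    (fun u hu => (hderiv u hu).hasDerivWithinAt) hDint
  have hG1 : G 1 = 0 := by
    simp only [hG]
    rw [show (1:ℝ) - 1 = 0 by ring, zero_pow (by omega)]
    ring
  have hG0 : G 0 = 0 := by
    simp only [hG]
    rw [Real.zero_rpow hα.ne']
    ring
  rw [hG1, hG0, sub_zero, intervalIntegral.integral_of_le zero_le_one,
    MeasureTheory.integral_Ioc_eq_integral_Ioo] at hftc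
  -- linearity of integral
  have hlin : ∫ u in Set.Ioo (0:ℝ) 1, D u
      = α * (∫ u in Set.Ioo (0:ℝ) 1, (1-u)^x * (1+c*u)^(N-x) * u^(α-1))
      - μ * x * ((∫ u in Set.Ioo (0:ℝ) 1, (1-u)^(x-1) * (1+c*u)^(N-(x-1)) * u^(α-1))
          - ∫ u in Set.Ioo (0:ℝ) 1, (1-u)^x * (1+c*u)^(N-x) * u^(α-1))
      - ν * ((N:ℝ) - x) * ((∫ u in Set.Ioo (0:ℝ) 1, (1-u)^(x+1) * (1+c*u)^(N-(x+1)) * u^(α-1))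
          - ∫ u in Set.Ioo (0:ℝ) 1, (1-u)^x * (1+c*u)^(N-x) * u^(α-1)) := by
    simp only [hD]
    rw [MeasureTheory.integral_sub J01 J2, MeasureTheory.integral_sub J0 J1,
      MeasureTheory.integral_const_mul, MeasureTheory.integral_const_mul,
      MeasureTheory.integral_const_mul,
      MeasureTheory.integral_sub I1 I0, MeasureTheory.integral_sub I2 I0]
  rw [hlin] at hftc
  exact hftc

/-- The function `f(x,t) = e^{-αt} ∫₀¹ (1-u)^x (1 + (ν/μ)u)^{N-x} u^{α-1} du` is
space-time harmonic for the Ehrenfest generator away from the state `0`. -/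
theorem ehrenfest_Ialpha_harmonic
    (N : ℕ) (hN : 1 ≤ N) (ν μ : ℝ) (hν : ν ∈ Set.Ioo (0:ℝ) 1) (hμ : μ = 1 - ν)
    (α : ℝ) (hα : 0 < α) (f : ℕ → ℝ → ℝ)
    (hf : ∀ (x : ℕ) (t : ℝ),
      f x t = Real.exp (-α * t) *
        ∫ u in Set.Ioo (0:ℝ) 1,
          (1 - u) ^ x * (1 + (ν / μ) * u) ^ (N - x) * u ^ (α - 1)) :
    ∀ (x : ℕ), 1 ≤ x → x ≤ N → ∀ t : ℝ,
      deriv (f x) t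
        + μ * x * (f (x - 1) t - f x t)
        + ν * ((N : ℝ) - x) * (f (x + 1) t - f x t) = 0 := by
  obtain ⟨hν0, hν1⟩ := hν
  intro x hx1 hxN t
  have key := ehrenfest_key N ν μ hν0 hν1 hμ α hα x hx1 hxN
  have hfx : f x = fun s : ℝ => Real.exp (-α * s) *
      ∫ u in Set.Ioo (0:ℝ) 1, (1-u)^x * (1+(ν/μ)*u)^(N-x) * u^(α-1) := funext (hf x)
  have hd : HasDerivAt (f x)
      (Real.exp (-α * t) * (-α * 1) *
        ∫ u in Set.Ioo (0:ℝ) 1, (1-u)^x * (1+(ν/μ)*u)^(N-x) * u^(α-1)) t := by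
    rw [hfx]
    exact (((hasDerivAt_id t).const_mul (-α)).exp).mul_const _
  rw [hd.deriv, hf (x-1) t, hf (x+1) t, hf x t]
  linear_combination (-Real.exp (-α * t)) * key
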